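/- With R₀ the quaternionic projective space curvature tensor on (V, I, J, K) and {X, IX, Y, IY} orthonormal, one has R₀(X,IX,Y,IY) = (1 − e(X,Y))/2 where e(X,Y) = ⟨JX,Y⟩² + ⟨KX,Y⟩², and consequently the isotropic curvature satisfies R₀^iso(X,IX,Y,IY) = 4 e(X,Y). -/
import Mathlib


open scoped RealInnerProductSpace

/-- The curvature tensor `R₀` of quaternionic projective space as a `(0,4)`-tensor. -/
noncomputable def quatR0 {E : Type*} [NormedAddCommGroup E] [InnerProductSpace ℝ E]
    (I J K : E →ₗ[ℝ] E) (X Y Z W : E) : ℝ :=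
  (1 / 4) * (⟪X, Z⟫ * ⟪Y, W⟫ - ⟪Y, Z⟫ * ⟪X, W⟫
    + 2 * ⟪I X, Y⟫ * ⟪I Z, W⟫ + ⟪I X, Z⟫ * ⟪I Y, W⟫ - ⟪I Y, Z⟫ * ⟪I X, W⟫
    + 2 * ⟪J X, Y⟫ * ⟪J Z, W⟫ + ⟪J X, Z⟫ * ⟪J Y, W⟫ - ⟪J Y, Z⟫ * ⟪J X, W⟫
    + 2 * ⟪K X, Y⟫ * ⟪K Z, W⟫ + ⟪K X, Z⟫ * ⟪K Y, W⟫ - ⟪K Y, Z⟫ * ⟪K X, W⟫)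

/-- The isotropic-curvature expression of a `(0,4)`-tensor on a 4-frame. -/
noncomputable def isoCurv4 {E : Type*} (R : E → E → E → E → ℝ)
    (e₁ e₂ e₃ e₄ : E) : ℝ :=
  R e₁ e₃ e₁ e₃ + R e₁ e₄ e₁ e₄ + R e₂ e₃ e₂ e₃ + R e₂ e₄ e₂ e₄ - 2 * R e₁ e₂ e₃ e₄

/-- For the quaternionic projective space curvature tensor `R₀` on
`(V, I, J, K)` and `{X, IX, Y, IY}` orthonormal, with
`e(X,Y) = ⟪JX,Y⟫² + ⟪KX,Y⟫²`, one has `R₀(X,IX,Y,IY) = (1 − e(X,Y))/2` and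
`R₀^iso(X,IX,Y,IY) = 4 e(X,Y)`. -/
theorem quatR0_isoCurv
    {E : Type*} [NormedAddCommGroup E] [InnerProductSpace ℝ E] [FiniteDimensional ℝ E]
    {n : ℕ} (hdim : Module.finrank ℝ E = 4 * n)
    (I J K : E →ₗ[ℝ] E)
    (hI2 : ∀ x, I (I x) = -x) (hJ2 : ∀ x, J (J x) = -x) (hK2 : ∀ x, K (K x) = -x)
    (hIO : ∀ x y, ⟪I x, I y⟫ = ⟪x, y⟫) (hJO : ∀ x y, ⟪J x, J y⟫ = ⟪x, y⟫)
    (hKO : ∀ x y, ⟪K x, K y⟫ = ⟪x, y⟫)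
    (hIJ : ∀ x, I (J x) = K x) (hJI : ∀ x, J (I x) = - K x)
    (hJK : ∀ x, J (K x) = I x) (hKJ : ∀ x, K (J x) = - I x)
    (hKI : ∀ x, K (I x) = J x) (hIK : ∀ x, I (K x) = - J x)
    (X Y : E) (hX : ‖X‖ = 1) (hY : ‖Y‖ = 1)
    (hXY : ⟪X, Y⟫ = 0) (hXIY : ⟪X, I Y⟫ = 0) :
    quatR0 I J K X (I X) Y (I Y) = (1 - (⟪J X, Y⟫ ^ 2 + ⟪K X, Y⟫ ^ 2)) / 2 ∧
    isoCurv4 (quatR0 I J K) X (I X) Y (I Y) =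
      4 * (⟪J X, Y⟫ ^ 2 + ⟪K X, Y⟫ ^ 2) := by

  have hIsk : ∀ x y : E, ⟪I x, y⟫ = -⟪x, I y⟫ := by
    intro x y
    have := hIO x (I y)
    rw [hI2, inner_neg_right] at this
    linarith
  have hJsk : ∀ x y : E, ⟪J x, y⟫ = -⟪x, J y⟫ := by
    intro x y
    have := hJO x (J y)
    rw [hJ2, inner_neg_right] at this
    linarith
  have hKsk : ∀ x y : E, ⟪K x, y⟫ = -⟪x, K y⟫ := by
    intro x y
    have := hKO x (K y)
    rw [hK2, inner_neg_right] at this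
    linarith
  have hXX : ⟪X, X⟫ = 1 := by
    rw [real_inner_self_eq_norm_sq, hX]; norm_num
  have hYY : ⟪Y, Y⟫ = 1 := by
    rw [real_inner_self_eq_norm_sq, hY]; norm_num
  have hskew0 : ∀ (A : E →ₗ[ℝ] E), (∀ x y : E, ⟪A x, y⟫ = -⟪x, A y⟫) →
      ∀ x : E, ⟪x, A x⟫ = 0 := by
    intro A hA x
    have h := hA x x
    have h2 : ⟪x, A x⟫ = ⟪A x, x⟫ := real_inner_comm (A x) x
    linarith
  have hXIX : ⟪X, I X⟫ = 0 := hskew0 I hIsk X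
  have hXJX : ⟪X, J X⟫ = 0 := hskew0 J hJsk X
  have hXKX : ⟪X, K X⟫ = 0 := hskew0 K hKsk X
  have hYIY : ⟪Y, I Y⟫ = 0 := hskew0 I hIsk Y
  have hYJY : ⟪Y, J Y⟫ = 0 := hskew0 J hJsk Y
  have hYKY : ⟪Y, K Y⟫ = 0 := hskew0 K hKsk Y
  have hYX : ⟪Y, X⟫ = 0 := by rw [real_inner_comm]; exact hXY
  have hYIX : ⟪Y, I X⟫ = 0 := by
    rw [real_inner_comm, hIsk, hXIY]; ring
  have hYJX : ⟪Y, J X⟫ = -⟪X, J Y⟫ := by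
    rw [real_inner_comm, hJsk]
  have hYKX : ⟪Y, K X⟫ = -⟪X, K Y⟫ := by
    rw [real_inner_comm, hKsk]
  constructor
  · simp only [quatR0, isoCurv4, hIJ, hJI, hJK, hKJ, hKI, hIK, hI2, hJ2, hK2,
      map_neg, inner_neg_left, inner_neg_right, hIsk, hJsk, hKsk,
      hXX, hYY, hXY, hYX, hXIY, hYIX, hXIX, hXJX, hXKX, hYIY, hYJY, hYKY,
      hYJX, hYKX]
    ring
  · simp only [quatR0, isoCurv4, hIJ, hJI, hJK, hKJ, hKI, hIK, hI2, hJ2, hK2,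
      map_neg, inner_neg_left, inner_neg_right, hIsk, hJsk, hKsk,
      hXX, hYY, hXY, hYX, hXIY, hYIX, hXIX, hXJX, hXKX, hYIY, hYJY, hYKY,
      hYJX, hYKX]
    ring
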